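/- Let S be a measurable space in which singletons are measurable, A a set, X := S × A, γ ∈ (0,1), and let (s_i, a_i, r_i, s'_i, a'_i)_{i=1}^n be data points, with x_i := (s_i, a_i) and y_i := (s'_i, a'_i, r_i). Let q* : X → ℝ and define Q_{π,∞} := { q : X → ℝ : q is measurable and q(s_i, a_i) − γ·q(s'_i, a'_i) − r_i = q*(s_i, a_i) − γ·q*(s'_i, a'_i) − r_i for all i = 1,…,n }. Let μ be a probability measure on X such that q* is μ-integrable and μ( { (s,a) ∈ X : s ∉ {s_1,…,s_n, s'_1,…,s'_n} } ) > 0. Then the supremum over μ-integrable q ∈ Q_{π,∞} of ∫ q dμ equals +∞, and the infimum over μ-integrable q ∈ Q_{π,∞} of ∫ q dμ equals −∞ (in the extended reals). -/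

import Mathlib

open MeasureTheory

/-- Proposition `pro:free`: unless the data states almost surely cover the state space, the
supremum (resp. infimum) of `∫ q dμ` over integrable `q` in
`Q_{π,∞} = {q measurable : the empirical Bellman residuals of q agree with those of q⋆}`
is `+∞` (resp. `−∞`). -/
theorem stmt_7
    {S : Type*} [MeasurableSpace S] [MeasurableSingletonClass S]
    {A : Type*} [MeasurableSpace A]
    (γ : ℝ) (hγ : γ ∈ Set.Ioo (0 : ℝ) 1)
    (n : ℕ)
    (s s' : Fin n → S) (a a' : Fin n → A) (r : Fin n → ℝ)
    (qstar : S × A → ℝ) (hqstar_meas : Measurable qstar)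
    (μ : Measure (S × A)) [IsProbabilityMeasure μ]
    (hqstar_int : Integrable qstar μ)
    (hpos : 0 < μ {p : S × A | ∀ i : Fin n, p.1 ≠ s i ∧ p.1 ≠ s' i}) :
    (⨆ (q : S × A → ℝ)
        (_ : Measurable q ∧
          (∀ i : Fin n, q (s i, a i) - γ * q (s' i, a' i) - r i
            = qstar (s i, a i) - γ * qstar (s' i, a' i) - r i) ∧
          Integrable q μ),
        ((∫ p, q p ∂μ : ℝ) : EReal)) = (⊤ : EReal)
    ∧ (⨅ (q : S × A → ℝ)
        (_ : Measurable q ∧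
          (∀ i : Fin n, q (s i, a i) - γ * q (s' i, a' i) - r i
            = qstar (s i, a i) - γ * qstar (s' i, a' i) - r i) ∧
          Integrable q μ),
        ((∫ p, q p ∂μ : ℝ) : EReal)) = (⊥ : EReal) := by
  set E : Set (S × A) := {p : S × A | ∀ i : Fin n, p.1 ≠ s i ∧ p.1 ≠ s' i} with hEdef
  have hE : MeasurableSet E := by
    have : E = ⋂ i : Fin n,
        ((Prod.fst ⁻¹' {s i})ᶜ ∩ (Prod.fst ⁻¹' {s' i})ᶜ : Set (S × A)) := by
      ext p; simp [hEdef]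
    rw [this]
    exact MeasurableSet.iInter fun i =>
      ((measurable_fst (measurableSet_singleton (s i))).compl).inter
        ((measurable_fst (measurableSet_singleton (s' i))).compl)
  set m : ℝ := (μ E).toReal with hmdef
  have hm : 0 < m := ENNReal.toReal_pos hpos.ne' (measure_ne_top μ E)
  -- for each c : ℝ, build a witness
  have key : ∀ c : ℝ, ∃ q : S × A → ℝ,
      (Measurable q ∧
        (∀ i : Fin n, q (s i, a i) - γ * q (s' i, a' i) - r i
          = qstar (s i, a i) - γ * qstar (s' i, a' i) - r i) ∧
        Integrable q μ) ∧ ∫ p, q p ∂μ = ∫ p, qstar p ∂μ + c * m := by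
    intro c
    refine ⟨fun p => qstar p + E.indicator (fun _ => c) p, ⟨?_, ?_, ?_⟩, ?_⟩
    · exact hqstar_meas.add (measurable_const.indicator hE)
    · intro i
      have h1 : ((s i, a i) : S × A) ∉ E := by
        intro h; exact (h i).1 rfl
      have h2 : ((s' i, a' i) : S × A) ∉ E := by
        intro h; exact (h i).2 rfl
      simp [Set.indicator_of_notMem h1, Set.indicator_of_notMem h2]
    · exact hqstar_int.add ((integrable_indicator_iff hE).2
        (integrableOn_const (measure_lt_top μ E).ne))
    · have hind : Integrable (E.indicator (fun _ => c)) μ :=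
        (integrable_indicator_iff hE).2
          (integrableOn_const (measure_lt_top μ E).ne)
      rw [integral_add hqstar_int hind, integral_indicator_const c hE]
      ring_nf
      rw [mul_comm]
      ring_nf
      simp only [Measure.real, hmdef]
      ring
  constructor
  · rw [iSup₂_eq_top]
    intro b hb
    rcases eq_or_ne b ⊥ with rfl | hb'
    · obtain ⟨q, hq, _⟩ := key 0
      exact ⟨q, hq, EReal.bot_lt_coe _⟩
    · set c : ℝ := (b.toReal - ∫ p, qstar p ∂μ + 1) / m with hcdef
      obtain ⟨q, hq, hint⟩ := key c
      refine ⟨q, hq, ?_⟩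
      have : ∫ p, q p ∂μ = b.toReal + 1 := by
        rw [hint, hcdef]; field_simp; ring
      rw [this]
      calc b = ((b.toReal : ℝ) : EReal) := (EReal.coe_toReal hb.ne hb').symm
        _ < ((b.toReal + 1 : ℝ) : EReal) := by exact_mod_cast lt_add_one _
  · rw [iInf₂_eq_bot]
    intro b hb
    rcases eq_or_ne b ⊤ with rfl | hb'
    · obtain ⟨q, hq, _⟩ := key 0
      exact ⟨q, hq, EReal.coe_lt_top _⟩
    · set c : ℝ := (b.toReal - ∫ p, qstar p ∂μ - 1) / m with hcdef
      obtain ⟨q, hq, hint⟩ := key c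
      refine ⟨q, hq, ?_⟩
      have : ∫ p, q p ∂μ = b.toReal - 1 := by
        rw [hint, hcdef]; field_simp; ring
      rw [this]
      calc ((b.toReal - 1 : ℝ) : EReal) < ((b.toReal : ℝ) : EReal) := by
            exact_mod_cast sub_one_lt _
        _ = b := EReal.coe_toReal hb' hb.ne'
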